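/- For N a standard Gaussian random variable and any u ∈ ℝ, r > 0, the derivative with respect to r of E[log(1 + e^{r·N_u}) - r·N_u·e^{r·N_u}/(1 + e^{r·N_u})], where N_u = u + N, equals -E[r·N_u²·e^{r·N_u}/(1 + e^{r·N_u})²], which is strictly negative. Consequently r ↦ E[ρ(r·N_u)] is strictly decreasing on (0,∞), where ρ(t) = log(1+e^t) - t e^t/(1+e^t). -/

import Mathlib

open MeasureTheory ProbabilityTheory Real

private lemma one_add_exp_pos (t : ℝ) : (0:ℝ) < 1 + Real.exp t := by positivity

private lemma hasDerivAt_logistic (t : ℝ) :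
    HasDerivAt (fun t => Real.exp t / (1 + Real.exp t))
      (Real.exp t / (1 + Real.exp t) ^ 2) t := by
  have h := (Real.hasDerivAt_exp t).div
    ((hasDerivAt_const t (1:ℝ)).add (Real.hasDerivAt_exp t)) (ne_of_gt (one_add_exp_pos t))
  refine h.congr_deriv ?_
  have h1 := (one_add_exp_pos t).ne'
  simp only [Pi.add_apply]
  ring

private lemma hasDerivAt_rho_fun (t : ℝ) :
    HasDerivAt (fun t => Real.log (1 + Real.exp t) - t * Real.exp t / (1 + Real.exp t))
      (-(t * Real.exp t / (1 + Real.exp t) ^ 2)) t := by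
  have h1 : HasDerivAt (fun t => Real.log (1 + Real.exp t)) (Real.exp t / (1 + Real.exp t)) t := by
    have h := ((Real.hasDerivAt_exp t).const_add (1:ℝ)).log (ne_of_gt (one_add_exp_pos t))
    simpa using h
  have h2 : HasDerivAt (fun t => t * (Real.exp t / (1 + Real.exp t)))
      (1 * (Real.exp t / (1 + Real.exp t)) + t * (Real.exp t / (1 + Real.exp t) ^ 2)) t :=
    (hasDerivAt_id t).mul (hasDerivAt_logistic t)
  have hfun : (fun t => Real.log (1 + Real.exp t) - t * Real.exp t / (1 + Real.exp t))
      = fun t => Real.log (1 + Real.exp t) - t * (Real.exp t / (1 + Real.exp t)) := by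
    funext s; rw [mul_div_assoc]
  rw [hfun]
  refine (h1.sub h2).congr_deriv ?_
  ring

private lemma hasDerivAt_param (a s : ℝ) :
    HasDerivAt (fun s : ℝ => Real.log (1 + Real.exp (s * a)) -
        s * a * Real.exp (s * a) / (1 + Real.exp (s * a)))
      (-(s * a ^ 2 * Real.exp (s * a) / (1 + Real.exp (s * a)) ^ 2)) s := by
  have h := HasDerivAt.comp s (hasDerivAt_rho_fun (s * a)) (hasDerivAt_mul_const a)
  refine h.congr_deriv ?_
  ring

private lemma rho_abs_le (t : ℝ) :
    |Real.log (1 + Real.exp t) - t * Real.exp t / (1 + Real.exp t)| ≤ Real.log 2 + 2 * |t| := by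
  have hpos := one_add_exp_pos t
  have h1 : 0 ≤ Real.log (1 + Real.exp t) := Real.log_nonneg (by nlinarith [Real.exp_pos t])
  have h2 : Real.log (1 + Real.exp t) ≤ Real.log 2 + |t| := by
    have hle : (1:ℝ) + Real.exp t ≤ 2 * Real.exp |t| := by
      have e1 : Real.exp t ≤ Real.exp |t| := Real.exp_le_exp.2 (le_abs_self t)
      have e2 : (1:ℝ) ≤ Real.exp |t| := Real.one_le_exp (abs_nonneg t)
      nlinarith
    calc Real.log (1 + Real.exp t) ≤ Real.log (2 * Real.exp |t|) := Real.log_le_log hpos hle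
      _ = Real.log 2 + |t| := by
          rw [Real.log_mul (by norm_num) (Real.exp_pos _).ne', Real.log_exp]
  have h3 : |t * Real.exp t / (1 + Real.exp t)| ≤ |t| := by
    rw [abs_div, abs_mul, abs_of_pos hpos, abs_of_pos (Real.exp_pos t), div_le_iff₀ hpos]
    nlinarith [Real.exp_pos t, abs_nonneg t]
  have habs : |Real.log (1 + Real.exp t) - t * Real.exp t / (1 + Real.exp t)|
      ≤ |Real.log (1 + Real.exp t)| + |t * Real.exp t / (1 + Real.exp t)| := by
    rw [sub_eq_add_neg]
    exact (abs_add_le _ _).trans (by rw [abs_neg])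
  rw [abs_of_nonneg h1] at habs
  linarith

private lemma sq_bound (u x : ℝ) :
    (1 + (u + x) ^ 2) * Real.exp (-x ^ 2 / 2)
      ≤ (9 + 2 * u ^ 2) * Real.exp (-(1/4 : ℝ) * x ^ 2) := by
  set B := Real.exp (-(1/4 : ℝ) * x ^ 2) with hB
  have hB0 : 0 < B := Real.exp_pos _
  have hB1 : B ≤ 1 := by
    rw [hB, Real.exp_le_one_iff]; nlinarith [sq_nonneg x]
  have hAB : Real.exp (-x ^ 2 / 2) = B * B := by
    rw [hB, ← Real.exp_add]; ring_nf
  have h4 : x ^ 2 * B ≤ 4 := by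
    have := Real.add_one_le_exp ((1/4 : ℝ) * x ^ 2)
    have hinv : B = (Real.exp ((1/4 : ℝ) * x ^ 2))⁻¹ := by
      rw [hB, ← Real.exp_neg]; ring_nf
    rw [hinv]
    rw [mul_inv_le_iff₀ (Real.exp_pos _)]
    nlinarith
  have hsq : (u + x) ^ 2 ≤ 2 * u ^ 2 + 2 * x ^ 2 := by nlinarith [sq_nonneg (u - x)]
  rw [hAB]
  have hp1 : (u + x) ^ 2 * (B * B) ≤ (2 * u ^ 2 + 2 * x ^ 2) * (B * B) :=
    mul_le_mul_of_nonneg_right hsq (by positivity)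
  have hp2 : x ^ 2 * B * B ≤ 4 * B := mul_le_mul_of_nonneg_right h4 hB0.le
  have hp3 : B * B ≤ 1 * B := mul_le_mul_of_nonneg_right hB1 hB0.le
  have hp4 : u ^ 2 * (B * B) ≤ u ^ 2 * (1 * B) := mul_le_mul_of_nonneg_left hp3 (sq_nonneg u)
  nlinarith [hp1, hp2, hp3, hp4]

private lemma integrable_one_add_sq (u : ℝ) :
    Integrable (fun x => 1 + (u + x) ^ 2) (gaussianReal 0 1) := by
  rw [gaussianReal_of_var_ne_zero 0 one_ne_zero,
    integrable_withDensity_iff (measurable_gaussianPDF 0 1)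
      (Filter.Eventually.of_forall fun x => ENNReal.ofReal_lt_top)]
  have hEq : ∀ x : ℝ, ((gaussianPDF 0 1 x).toReal) = gaussianPDFReal 0 1 x := fun x =>
    ENNReal.toReal_ofReal (gaussianPDFReal_nonneg 0 1 x)
  simp only [hEq]
  have hb : Integrable (fun x : ℝ =>
      ((Real.sqrt (2 * π))⁻¹ * (9 + 2 * u ^ 2)) * Real.exp (-(1/4 : ℝ) * x ^ 2)) volume :=
    (integrable_exp_neg_mul_sq (by norm_num)).const_mul _
  refine hb.mono' ?_ (Filter.Eventually.of_forall fun x => ?_)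
  · exact ((measurable_const.add (((measurable_const.add measurable_id).pow_const 2))).mul
      (measurable_gaussianPDFReal 0 1)).aestronglyMeasurable
  · have h := sq_bound u x
    have hc : (0:ℝ) ≤ (Real.sqrt (2 * π))⁻¹ := by positivity
    simp only [gaussianPDFReal, NNReal.coe_one, mul_one, sub_zero]
    rw [Real.norm_eq_abs, abs_of_nonneg (by positivity)]
    calc (1 + (u + x) ^ 2) * ((Real.sqrt (2 * π))⁻¹ * Real.exp (-x ^ 2 / 2))
        = (Real.sqrt (2 * π))⁻¹ * ((1 + (u + x) ^ 2) * Real.exp (-x ^ 2 / 2)) := by ring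
      _ ≤ (Real.sqrt (2 * π))⁻¹ * ((9 + 2 * u ^ 2) * Real.exp (-(1/4 : ℝ) * x ^ 2)) :=
          mul_le_mul_of_nonneg_left h hc
      _ = (Real.sqrt (2 * π))⁻¹ * (9 + 2 * u ^ 2) * Real.exp (-(1/4 : ℝ) * x ^ 2) := by ring

private lemma cont_param (u c : ℝ) : Continuous fun x : ℝ =>
    Real.log (1 + Real.exp (c * (u + x))) -
      c * (u + x) * Real.exp (c * (u + x)) / (1 + Real.exp (c * (u + x))) := by
  have hc : Continuous fun x : ℝ => c * (u + x) := continuous_const.mul (continuous_const.add continuous_id)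
  have he : Continuous fun x : ℝ => 1 + Real.exp (c * (u + x)) :=
    continuous_const.add (Real.continuous_exp.comp hc)
  exact (he.log fun x => (one_add_exp_pos _).ne').sub
    ((hc.mul (Real.continuous_exp.comp hc)).div he fun x => (one_add_exp_pos _).ne')

private lemma cont_param' (u s : ℝ) : Continuous fun x : ℝ =>
    -(s * (u + x) ^ 2 * Real.exp (s * (u + x)) / (1 + Real.exp (s * (u + x))) ^ 2) := by
  have hc : Continuous fun x : ℝ => s * (u + x) := continuous_const.mul (continuous_const.add continuous_id)
  have he : Continuous fun x : ℝ => 1 + Real.exp (s * (u + x)) :=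
    continuous_const.add (Real.continuous_exp.comp hc)
  exact (((continuous_const.mul ((continuous_const.add continuous_id).pow 2)).mul
    (Real.continuous_exp.comp hc)).div (he.pow 2)
    fun x => pow_ne_zero 2 (one_add_exp_pos _).ne').neg

private lemma logistic_sq_le (t : ℝ) : Real.exp t / (1 + Real.exp t) ^ 2 ≤ 1 := by
  rw [div_le_one (by positivity)]
  nlinarith [Real.exp_pos t, sq_nonneg (Real.exp t)]

/-- The key dominated-differentiation step. -/
private lemma main_deriv (u : ℝ) (r : ℝ) (hr : 0 < r) :
    Integrable (fun x => -(r * (u + x) ^ 2 * Real.exp (r * (u + x)) /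
        (1 + Real.exp (r * (u + x))) ^ 2)) (gaussianReal 0 1) ∧
    HasDerivAt (fun s : ℝ => ∫ x, (Real.log (1 + Real.exp (s * (u + x))) -
        s * (u + x) * Real.exp (s * (u + x)) / (1 + Real.exp (s * (u + x)))) ∂(gaussianReal 0 1))
      (∫ x, -(r * (u + x) ^ 2 * Real.exp (r * (u + x)) /
        (1 + Real.exp (r * (u + x))) ^ 2) ∂(gaussianReal 0 1)) r := by
  have hεpos : (0:ℝ) < r / 2 := by linarith
  refine hasDerivAt_integral_of_dominated_loc_of_deriv_le (μ := gaussianReal 0 1)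
    (F := fun s x => Real.log (1 + Real.exp (s * (u + x))) -
        s * (u + x) * Real.exp (s * (u + x)) / (1 + Real.exp (s * (u + x))))
    (F' := fun s x => -(s * (u + x) ^ 2 * Real.exp (s * (u + x)) /
        (1 + Real.exp (s * (u + x))) ^ 2))
    (bound := fun x => 2 * r * (1 + (u + x) ^ 2))
    (Metric.ball_mem_nhds r hεpos) ?_ ?_ ?_ ?_ ?_ ?_
  · exact Filter.Eventually.of_forall fun s => (cont_param u s).aestronglyMeasurable
  · -- integrability of F r
    refine ((integrable_one_add_sq u).const_mul (Real.log 2 + 2 * r)).mono'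
      (cont_param u r).aestronglyMeasurable (Filter.Eventually.of_forall fun x => ?_)
    have h1 := rho_abs_le (r * (u + x))
    have h2 : |r * (u + x)| ≤ r * (1 + (u + x) ^ 2) := by
      rw [abs_mul, abs_of_pos hr]
      have : |u + x| ≤ 1 + (u + x) ^ 2 := by
        nlinarith [sq_abs (u + x), abs_nonneg (u + x), sq_nonneg (|u + x| - 1)]
      nlinarith
    have hlog2 : (0:ℝ) ≤ Real.log 2 := Real.log_nonneg (by norm_num)
    rw [Real.norm_eq_abs]
    have hsq : (0:ℝ) ≤ (u + x) ^ 2 := sq_nonneg _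
    calc |Real.log (1 + Real.exp (r * (u + x))) -
          r * (u + x) * Real.exp (r * (u + x)) / (1 + Real.exp (r * (u + x)))|
        ≤ Real.log 2 + 2 * |r * (u + x)| := h1
      _ ≤ (Real.log 2 + 2 * r) * (1 + (u + x) ^ 2) := by nlinarith
  · exact (cont_param' u r).aestronglyMeasurable
  · -- bound
    refine Filter.Eventually.of_forall fun x s hs => ?_
    rw [Metric.mem_ball, Real.dist_eq] at hs
    have hsabs : |s| ≤ 2 * r := by
      have := abs_sub_abs_le_abs_sub s r
      rw [abs_of_pos hr] at this
      linarith [hs.le]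
    have hl := logistic_sq_le (s * (u + x))
    have hlpos : (0:ℝ) < Real.exp (s * (u + x)) / (1 + Real.exp (s * (u + x))) ^ 2 := by
      positivity
    rw [Real.norm_eq_abs, abs_neg, abs_div, abs_mul, abs_mul, abs_of_pos (Real.exp_pos _),
      abs_of_pos (pow_pos (one_add_exp_pos _) 2), abs_of_nonneg (sq_nonneg (u + x))]
    have key : |s| * (u + x) ^ 2 * Real.exp (s * (u + x)) / (1 + Real.exp (s * (u + x))) ^ 2
        = (|s| * (u + x) ^ 2) * (Real.exp (s * (u + x)) / (1 + Real.exp (s * (u + x))) ^ 2) := by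
      ring
    rw [key]
    calc (|s| * (u + x) ^ 2) * (Real.exp (s * (u + x)) / (1 + Real.exp (s * (u + x))) ^ 2)
        ≤ (|s| * (u + x) ^ 2) * 1 := by
          exact mul_le_mul_of_nonneg_left hl (by positivity)
      _ ≤ 2 * r * (1 + (u + x) ^ 2) := by nlinarith [sq_nonneg (u + x), abs_nonneg s]
  · exact (integrable_one_add_sq u).const_mul _
  · exact Filter.Eventually.of_forall fun x s _ => hasDerivAt_param (u + x) s

/-- For N ∼ N(0,1) and N_u = u + N, the map r ↦ E[ρ(r·N_u)] with
    ρ(t) = log(1+e^t) − t e^t/(1+e^t) has derivative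
    −E[r·N_u²·e^{r N_u}/(1+e^{r N_u})²] < 0 at every r > 0, hence is strictly
    decreasing on (0,∞). -/
theorem risk_decreasing_on_rays (u : ℝ) (ρ : ℝ → ℝ)
    (hρ : ∀ t, ρ t = Real.log (1 + Real.exp t) - t * Real.exp t / (1 + Real.exp t)) :
    (∀ r : ℝ, 0 < r →
      HasDerivAt (fun s : ℝ => ∫ x, ρ (s * (u + x)) ∂(gaussianReal 0 1))
        (-(∫ x, r * (u + x) ^ 2 * Real.exp (r * (u + x)) /
            (1 + Real.exp (r * (u + x))) ^ 2 ∂(gaussianReal 0 1))) r ∧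
      (-(∫ x, r * (u + x) ^ 2 * Real.exp (r * (u + x)) /
            (1 + Real.exp (r * (u + x))) ^ 2 ∂(gaussianReal 0 1))) < 0) ∧
    StrictAntiOn (fun s : ℝ => ∫ x, ρ (s * (u + x)) ∂(gaussianReal 0 1))
      (Set.Ioi 0) := by
  simp only [hρ]
  have hmain : ∀ r : ℝ, 0 < r →
      HasDerivAt (fun s : ℝ => ∫ x, (Real.log (1 + Real.exp (s * (u + x))) -
          s * (u + x) * Real.exp (s * (u + x)) / (1 + Real.exp (s * (u + x)))) ∂(gaussianReal 0 1))
        (-(∫ x, r * (u + x) ^ 2 * Real.exp (r * (u + x)) /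
            (1 + Real.exp (r * (u + x))) ^ 2 ∂(gaussianReal 0 1))) r ∧
      (-(∫ x, r * (u + x) ^ 2 * Real.exp (r * (u + x)) /
            (1 + Real.exp (r * (u + x))) ^ 2 ∂(gaussianReal 0 1))) < 0 := by
    intro r hr
    obtain ⟨hint, hderiv⟩ := main_deriv u r hr
    rw [integral_neg] at hderiv
    refine ⟨hderiv, ?_⟩
    rw [neg_lt_zero]
    -- 0 < ∫ g
    have hint' : Integrable (fun x => r * (u + x) ^ 2 * Real.exp (r * (u + x)) /
        (1 + Real.exp (r * (u + x))) ^ 2) (gaussianReal 0 1) := by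
      exact hint.neg.congr (Filter.Eventually.of_forall fun x => by simp)
    have hnn : 0 ≤ᵐ[gaussianReal 0 1] fun x => r * (u + x) ^ 2 * Real.exp (r * (u + x)) /
        (1 + Real.exp (r * (u + x))) ^ 2 :=
      Filter.Eventually.of_forall fun x => div_nonneg
        (mul_nonneg (mul_nonneg hr.le (sq_nonneg _)) (Real.exp_pos _).le)
        (pow_pos (one_add_exp_pos _) 2).le
    rw [integral_pos_iff_support_of_nonneg_ae hnn hint']
    have hsupp : Function.support (fun x => r * (u + x) ^ 2 * Real.exp (r * (u + x)) /
        (1 + Real.exp (r * (u + x))) ^ 2) = {-u}ᶜ := by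
      ext x
      simp only [Function.mem_support, Set.mem_compl_iff, Set.mem_singleton_iff]
      constructor
      · intro h hx
        apply h
        rw [hx]
        simp
      · intro hx
        have hux : u + x ≠ 0 := fun h => hx (by linarith [h])
        have : 0 < r * (u + x) ^ 2 * Real.exp (r * (u + x)) /
            (1 + Real.exp (r * (u + x))) ^ 2 :=
          div_pos (mul_pos (mul_pos hr (sq_pos_of_ne_zero hux)) (Real.exp_pos _))
            (pow_pos (one_add_exp_pos _) 2)
        exact this.ne'
    rw [hsupp]
    have h0 : (gaussianReal 0 1) {(-u : ℝ)} = 0 :=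
      gaussianReal_absolutelyContinuous 0 one_ne_zero (measure_singleton _)
    rw [measure_compl (measurableSet_singleton _) (measure_ne_top _ _), h0, measure_univ]
    simp
  refine ⟨hmain, ?_⟩
  have hanti : StrictAntiOn (fun s : ℝ => ∫ x, (Real.log (1 + Real.exp (s * (u + x))) -
      s * (u + x) * Real.exp (s * (u + x)) / (1 + Real.exp (s * (u + x)))) ∂(gaussianReal 0 1))
      (Set.Ioi 0) := by
    apply strictAntiOn_of_deriv_neg (convex_Ioi 0)
    · intro s hs
      exact ((hmain s hs).1.differentiableAt.continuousAt).continuousWithinAt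
    · intro s hs
      rw [interior_Ioi] at hs
      rw [(hmain s hs).1.deriv]
      exact (hmain s hs).2
  exact hanti
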